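/- Let A be a commutative ring and let a, b ∈ A^× be such that a, b and a/b all lie in W_A. Set u := (1−a⁻¹)/(1−b⁻¹) and v := (1−a)/(1−b). Then in S²_ℤ(A^×) the following identity holds: a⊗(1−a) − b⊗(1−b) + (b/a)⊗(1−b/a) − u⊗(1−u) + v⊗(1−v) = 0. (This is the well-definedness of the map λ̄₂ : RP̄(A) → S²_ℤ(A^×), [a] ↦ a ⊗ (1−a), as a ℤ[G_A]-homomorphism for the trivial G_A-action on S²_ℤ(A^×).) -/

import Mathlib

open scoped TensorProduct

variable (A : Type*) [CommRing A]

/-- `S²_ℤ(A^×) := (A^× ⊗_ℤ A^×)/⟨a⊗b + b⊗a⟩`. -/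
def S2units : Type _ :=
  (Additive Aˣ ⊗[ℤ] Additive Aˣ) ⧸
    Submodule.span ℤ {x : Additive Aˣ ⊗[ℤ] Additive Aˣ |
      ∃ s t : Aˣ, x = Additive.ofMul s ⊗ₜ[ℤ] Additive.ofMul t
        + Additive.ofMul t ⊗ₜ[ℤ] Additive.ofMul s}

noncomputable instance : AddCommGroup (S2units A) := by unfold S2units; infer_instance

/-- The class of `s ⊗ t` in `S²_ℤ(A^×)`. -/
noncomputable def s2mk (s t : Aˣ) : S2units A :=
  Submodule.Quotient.mk (Additive.ofMul s ⊗ₜ[ℤ] Additive.ofMul t)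

lemma s2mk_mul_left (s t r : Aˣ) : s2mk A (s * t) r = s2mk A s r + s2mk A t r := by
  unfold s2mk
  refine Eq.trans ?_ (Submodule.Quotient.mk_add _)
  congr 1
  rw [show Additive.ofMul (s * t) = Additive.ofMul s + Additive.ofMul t from rfl,
    TensorProduct.add_tmul]

lemma s2mk_mul_right (r s t : Aˣ) : s2mk A r (s * t) = s2mk A r s + s2mk A r t := by
  unfold s2mk
  refine Eq.trans ?_ (Submodule.Quotient.mk_add _)
  congr 1
  rw [show Additive.ofMul (s * t) = Additive.ofMul s + Additive.ofMul t from rfl,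
    TensorProduct.tmul_add]

lemma s2mk_one_left (r : Aˣ) : s2mk A 1 r = 0 := by
  have h := s2mk_mul_left A 1 1 r
  rw [mul_one] at h
  exact (left_eq_add.mp h)

lemma s2mk_one_right (r : Aˣ) : s2mk A r 1 = 0 := by
  have h := s2mk_mul_right A r 1 1
  rw [mul_one] at h
  exact (left_eq_add.mp h)

lemma s2mk_inv_left (s r : Aˣ) : s2mk A s⁻¹ r = - s2mk A s r := by
  have h := s2mk_mul_left A s s⁻¹ r
  rw [mul_inv_cancel, s2mk_one_left] at h
  exact eq_neg_of_add_eq_zero_right h.symm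

lemma s2mk_inv_right (r s : Aˣ) : s2mk A r s⁻¹ = - s2mk A r s := by
  have h := s2mk_mul_right A r s s⁻¹
  rw [mul_inv_cancel, s2mk_one_right] at h
  exact eq_neg_of_add_eq_zero_right h.symm

lemma s2mk_swap_add (s t : Aˣ) : s2mk A s t + s2mk A t s = 0 := by
  unfold s2mk
  refine (Submodule.Quotient.mk_add _).symm.trans ((Submodule.Quotient.mk_eq_zero _).mpr ?_)
  exact Submodule.subset_span ⟨s, t, rfl⟩

theorem five_term_relation_lambda2
    (A : Type*) [CommRing A] (a b : Aˣ)
    (ha : IsUnit ((a : A) * (1 - (a : A))))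
    (hb : IsUnit ((b : A) * (1 - (b : A))))
    (hab : IsUnit (((a * b⁻¹ : Aˣ) : A) * (1 - ((a * b⁻¹ : Aˣ) : A))))
    (a1 : Aˣ) (ha1 : (a1 : A) = 1 - (a : A))
    (b1 : Aˣ) (hb1 : (b1 : A) = 1 - (b : A))
    (q1 : Aˣ) (hq1 : (q1 : A) = 1 - ((b * a⁻¹ : Aˣ) : A))
    (u : Aˣ) (hu : (u : A) * (1 - ((b⁻¹ : Aˣ) : A)) = 1 - ((a⁻¹ : Aˣ) : A))
    (u1 : Aˣ) (hu1 : (u1 : A) = 1 - (u : A))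
    (v : Aˣ) (hv : (v : A) * (1 - (b : A)) = 1 - (a : A))
    (v1 : Aˣ) (hv1 : (v1 : A) = 1 - (v : A)) :
    s2mk A a a1 - s2mk A b b1 + s2mk A (b * a⁻¹) q1 - s2mk A u u1 + s2mk A v v1 = 0 := by
  have hAinv : ((a⁻¹ : Aˣ) : A) * a = 1 := a.inv_mul
  have hBinv : ((b⁻¹ : Aˣ) : A) * b = 1 := b.inv_mul
  set d : Aˣ := q1 * a with hd
  have hd_val : (d : A) = (a : A) - (b : A) := by
    rw [hd, Units.val_mul, hq1, Units.val_mul]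
    linear_combination (-(b : A)) * hAinv
  have e_q1 : q1 = d * a⁻¹ := by
    rw [hd]; exact (mul_inv_cancel_right q1 a).symm
  have e_v : v = a1 * b1⁻¹ := by
    rw [eq_mul_inv_iff_mul_eq]
    exact Units.ext (by rw [Units.val_mul, hb1, ha1]; exact hv)
  have e_v1 : v1 = d * b1⁻¹ := by
    rw [eq_mul_inv_iff_mul_eq]
    exact Units.ext (by rw [Units.val_mul, hv1, hb1, hd_val]; linear_combination -hv)
  have e_u : u = a1 * b * (a * b1)⁻¹ := by
    rw [eq_mul_inv_iff_mul_eq]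
    refine Units.ext ?_
    rw [Units.val_mul, Units.val_mul, Units.val_mul, ha1, hb1]
    linear_combination (-(a : A) * (b : A)) * hu - ((u : A) * (a : A)) * hBinv
      + (b : A) * hAinv
  have e_u1 : u1 = d * (a * b1)⁻¹ := by
    rw [eq_mul_inv_iff_mul_eq]
    refine Units.ext ?_
    rw [Units.val_mul, Units.val_mul, hu1, hb1, hd_val]
    linear_combination ((a : A) * (b : A)) * hu + ((u : A) * (a : A)) * hBinv
      - (b : A) * hAinv
  rw [e_q1, e_u, e_u1, e_v, e_v1]
  simp only [mul_inv, s2mk_mul_left, s2mk_mul_right, s2mk_inv_left, s2mk_inv_right,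
    neg_neg, neg_add_rev]
  have h1 : s2mk A a1 a = - s2mk A a a1 :=
    eq_neg_of_add_eq_zero_right (s2mk_swap_add A a a1)
  have h2 : s2mk A b1 a = - s2mk A a b1 :=
    eq_neg_of_add_eq_zero_right (s2mk_swap_add A a b1)
  rw [h1, h2]
  abel
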